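/- Let a, c > 0, b, d ≥ 0, P_max > 0, α = d(1 + b·P_max), d > 0, and Q₁ = (Re(√((a − α)(a − α + a·c·P_max))) − α)/(a·d). If Q₁ ≤ 0, then the frontier function Φ₂: r₁ ↦ log₂(1 + c·P_max/(1 + (d/a)(1 + b·P_max)(2^{r₁} − 1))) is convex on 0 ≤ r₁ ≤ log₂(1 + a·P_max/(1 + b·P_max)). -/

import Mathlib

open Real Set

lemma logexp_hasDerivAt (C k L r : ℝ) (h : C + k * Real.exp (L * r) ≠ 0) :
    HasDerivAt (fun x => Real.log (C + k * Real.exp (L * x)))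
      (k * L * Real.exp (L * r) / (C + k * Real.exp (L * r))) r := by
  have h1 : HasDerivAt (fun x : ℝ => L * x) L r := by
    simpa using (hasDerivAt_id r).const_mul L
  have h2 : HasDerivAt (fun x : ℝ => Real.exp (L * x)) (Real.exp (L * r) * L) r :=
    (Real.hasDerivAt_exp (L * r)).comp r h1
  have h3 : HasDerivAt (fun x : ℝ => C + k * Real.exp (L * x))
      (k * (Real.exp (L * r) * L)) r := (h2.const_mul k).const_add C
  have h4 := h3.log h
  convert h4 using 1
  ring

lemma frac_hasDerivAt (C k L r : ℝ) (h : C + k * Real.exp (L * r) ≠ 0) :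
    HasDerivAt (fun x => k * L * Real.exp (L * x) / (C + k * Real.exp (L * x)))
      (k * L ^ 2 * Real.exp (L * r) * C / (C + k * Real.exp (L * r)) ^ 2) r := by
  have h1 : HasDerivAt (fun x : ℝ => L * x) L r := by
    simpa using (hasDerivAt_id r).const_mul L
  have h2 : HasDerivAt (fun x : ℝ => Real.exp (L * x)) (Real.exp (L * r) * L) r :=
    (Real.hasDerivAt_exp (L * r)).comp r h1
  have hN : HasDerivAt (fun x : ℝ => k * L * Real.exp (L * x))
      (k * L * (Real.exp (L * r) * L)) r := h2.const_mul (k * L)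
  have hD : HasDerivAt (fun x : ℝ => C + k * Real.exp (L * x))
      (k * (Real.exp (L * r) * L)) r := (h2.const_mul k).const_add C
  have h4 : HasDerivAt (fun x => k * L * Real.exp (L * x) / (C + k * Real.exp (L * x))) _ r :=
    hN.div hD h
  convert h4 using 1
  field_simp
  ring

set_option maxHeartbeats 1000000 in
theorem phi2_convex_of_Q1_le (a b c d Pmax : ℝ) (ha : 0 < a) (hc : 0 < c)
    (hb : 0 ≤ b) (hd : 0 < d) (hP : 0 < Pmax)
    (hQ : (Real.sqrt ((a - d * (1 + b * Pmax)) *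
            (a - d * (1 + b * Pmax) + a * c * Pmax)) - d * (1 + b * Pmax)) / (a * d)
          ≤ 0) :
    ConvexOn ℝ (Icc (0:ℝ) (Real.logb 2 (1 + a * Pmax / (1 + b * Pmax))))
      (fun r₁ : ℝ =>
        Real.logb 2
          (1 + c * Pmax / (1 + (d / a) * (1 + b * Pmax) * ((2:ℝ) ^ r₁ - 1)))) := by
  have hbP : 0 < 1 + b * Pmax := by positivity
  set k : ℝ := d / a * (1 + b * Pmax) with hk_def
  have hk : 0 < k := by positivity
  set L : ℝ := Real.log 2 with hL_def
  have hL : 0 < L := Real.log_pos one_lt_two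
  set A : ℝ := 1 - k + c * Pmax with hA_def
  set B : ℝ := 1 - k with hB_def
  have hABd : A - B = c * Pmax := by rw [hA_def, hB_def]; ring
  have hcP : 0 < c * Pmax := by positivity
  -- key inequality A*B ≤ k^2
  have hAB : A * B ≤ k ^ 2 := by
    set α : ℝ := d * (1 + b * Pmax) with hα_def
    have hα : 0 < α := by positivity
    have had : 0 < a * d := mul_pos ha hd
    have hnum : Real.sqrt ((a - α) * (a - α + a * c * Pmax)) ≤ α := by
      by_contra hcon
      push_neg at hcon
      have := div_pos (by linarith :
        (0:ℝ) < Real.sqrt ((a - α) * (a - α + a * c * Pmax)) - α) had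
      linarith
    have hsq : (a - α) * (a - α + a * c * Pmax) ≤ α ^ 2 :=
      (Real.sqrt_le_iff.mp hnum).2
    have hak : a * k = α := by rw [hk_def, hα_def]; field_simp
    have haB : a * B = a - α := by rw [hB_def, ← hak]; ring
    have haA : a * A = a - α + a * c * Pmax := by rw [hA_def, ← hak]; ring
    have h2 : (a * A) * (a * B) ≤ (a * k) ^ 2 := by rw [haA, haB, hak]; nlinarith [hsq]
    have ha2 : 0 < a ^ 2 := by positivity
    nlinarith [h2, ha2]
  set R : ℝ := Real.logb 2 (1 + a * Pmax / (1 + b * Pmax)) with hR_def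
  -- positivity on the set
  have hQpos : ∀ r ∈ Icc (0:ℝ) R, 0 < B + k * Real.exp (L * r) := by
    intro r hr
    have he1 : 1 ≤ Real.exp (L * r) := Real.one_le_exp (mul_nonneg hL.le hr.1)
    rw [hB_def]
    nlinarith [mul_nonneg hk.le (sub_nonneg.mpr he1)]
  have hPpos : ∀ r ∈ Icc (0:ℝ) R, 0 < A + k * Real.exp (L * r) := by
    intro r hr
    have := hQpos r hr
    rw [hA_def]; rw [hB_def] at this; linarith
  -- convexity of the smooth model g
  have hgconv : ConvexOn ℝ (Icc (0:ℝ) R)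
      (fun r => (Real.log (A + k * Real.exp (L * r))
                - Real.log (B + k * Real.exp (L * r))) / L) := by
    apply convexOn_of_hasDerivWithinAt2_nonneg (convex_Icc _ _)
      (f' := fun x => (k * L * Real.exp (L * x) / (A + k * Real.exp (L * x))
            - k * L * Real.exp (L * x) / (B + k * Real.exp (L * x))) / L)
      (f'' := fun x => (k * L ^ 2 * Real.exp (L * x) * A / (A + k * Real.exp (L * x)) ^ 2
            - k * L ^ 2 * Real.exp (L * x) * B / (B + k * Real.exp (L * x)) ^ 2) / L)
    · apply ContinuousOn.div_const
      apply ContinuousOn.sub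
      · exact ContinuousOn.log (by fun_prop) (fun x hx => (hPpos x hx).ne')
      · exact ContinuousOn.log (by fun_prop) (fun x hx => (hQpos x hx).ne')
    · intro x hx
      rw [interior_Icc] at hx
      have hx' : x ∈ Icc (0:ℝ) R := ⟨hx.1.le, hx.2.le⟩
      exact (((logexp_hasDerivAt A k L x (hPpos x hx').ne').sub
        (logexp_hasDerivAt B k L x (hQpos x hx').ne')).div_const L).hasDerivWithinAt
    · intro x hx
      rw [interior_Icc] at hx
      have hx' : x ∈ Icc (0:ℝ) R := ⟨hx.1.le, hx.2.le⟩
      exact (((frac_hasDerivAt A k L x (hPpos x hx').ne').sub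
        (frac_hasDerivAt B k L x (hQpos x hx').ne')).div_const L).hasDerivWithinAt
    · intro x hx
      rw [interior_Icc] at hx
      have hx' : x ∈ Icc (0:ℝ) R := ⟨hx.1.le, hx.2.le⟩
      have hPp := hPpos x hx'
      have hQp := hQpos x hx'
      set e : ℝ := Real.exp (L * x) with he_def
      have he1 : 1 ≤ e := Real.one_le_exp (mul_nonneg hL.le hx.1.le)
      have hke : k ≤ k * e := by nlinarith
      have hke2 : k ^ 2 ≤ (k * e) ^ 2 := by nlinarith
      apply div_nonneg _ hL.le
      rw [sub_nonneg, div_le_div_iff₀ (by positivity) (by positivity)]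
      have id1 : A * (B + k * e) ^ 2 - B * (A + k * e) ^ 2
          = (A - B) * ((k * e) ^ 2 - A * B) := by ring
      have hnn : 0 ≤ (A - B) * ((k * e) ^ 2 - A * B) := by
        rw [hABd]
        exact mul_nonneg hcP.le (sub_nonneg.mpr (hAB.trans hke2))
      have key : B * (A + k * e) ^ 2 ≤ A * (B + k * e) ^ 2 := by linarith [id1, hnn]
      have hfac : (0:ℝ) ≤ k * L ^ 2 * e := by positivity
      have h5 := mul_le_mul_of_nonneg_left key hfac
      nlinarith [h5]
  -- transfer to the original function
  have heq : ∀ r ∈ Icc (0:ℝ) R,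
      Real.logb 2 (1 + c * Pmax / (1 + k * ((2:ℝ) ^ r - 1)))
        = (Real.log (A + k * Real.exp (L * r))
          - Real.log (B + k * Real.exp (L * r))) / L := by
    intro r hr
    have h2r : (2:ℝ) ^ r = Real.exp (L * r) := by
      rw [Real.rpow_def_of_pos two_pos, hL_def]
    have hQp := hQpos r hr
    have hPp := hPpos r hr
    have hXB : 1 + k * ((2:ℝ) ^ r - 1) = B + k * Real.exp (L * r) := by
      rw [h2r, hB_def]; ring
    have harg : 1 + c * Pmax / (1 + k * ((2:ℝ) ^ r - 1))
        = (A + k * Real.exp (L * r)) / (B + k * Real.exp (L * r)) := by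
      rw [hXB]
      field_simp
      rw [hA_def, hB_def]; ring
    rw [harg, ← Real.log_div_log, Real.log_div hPp.ne' hQp.ne', hL_def]
  exact ⟨hgconv.1, fun x hx y hy p q hp hq hpq => by
    simp only
    rw [heq x hx, heq y hy, heq _ (hgconv.1 hx hy hp hq hpq)]
    exact hgconv.2 hx hy hp hq hpq⟩
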